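/- arXiv:math/9307224 — 4 statements merged into one kernel-verified Lean document; each statement's English description precedes it below -/
import Mathlib

section
/- Let μ > 0, α > −1/2 and n ∈ ℕ. Then γ_α(n)/γ_{μ+α}(n) = (1/B(α + 1/2, μ)) ∫_{−1}^{1} t^n |t|^{2α} (1−t)^{μ−1} (1+t)^{μ} dt. -/
open MeasureTheory
open scoped BigOperators Nat

/-- Generalized factorial `γ_μ(n)`: `γ_μ(0) = 1`,
`γ_μ(n+1) = (n + 1 + 2μ θ_{n+1}) γ_μ(n)` where `θ_k = 1` if `k` is odd, `0` if even. -/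
noncomputable def genGamma (μ : ℝ) : ℕ → ℝ
  | 0 => 1
  | n + 1 => ((n : ℝ) + 1 + 2 * μ * (if (n + 1) % 2 = 1 then (1 : ℝ) else 0)) * genGamma μ n

/-- Generalized exponential function `e_μ(z) = Σ_{n≥0} z^n / γ_μ(n)`. -/
noncomputable def genExp (μ : ℝ) (z : ℂ) : ℂ :=
  ∑' n : ℕ, z ^ n / (genGamma μ n : ℂ)

/-- Generalized Hermite polynomial
`H_n^μ(x) = n! Σ_{k=0}^{⌊n/2⌋} (-1)^k (2x)^{n-2k} / (k! γ_μ(n-2k))`. -/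
noncomputable def genHermite (μ : ℝ) (n : ℕ) (x : ℂ) : ℂ :=
  (n ! : ℂ) * ∑ k ∈ Finset.range (n / 2 + 1),
    (-1) ^ k * (2 * x) ^ (n - 2 * k) / ((k ! : ℂ) * ((genGamma μ (n - 2 * k) : ℝ) : ℂ))

/-- Dunkl operator `(D_μ f)(x) = f'(x) + (μ/x)(f(x) - f(-x))`. -/
noncomputable def dunkl (μ : ℝ) (f : ℝ → ℂ) (x : ℝ) : ℂ :=
  deriv f x + ((μ / x : ℝ) : ℂ) * (f x - f (-x))

/-- Euler beta function `B(a,b) = Γ(a)Γ(b)/Γ(a+b)`. -/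
noncomputable def realBeta (a b : ℝ) : ℝ :=
  Real.Gamma a * Real.Gamma b / Real.Gamma (a + b)


lemma beta_fun_eq (a b : ℝ) (x : ℝ) (hx : x ∈ Set.Icc (0:ℝ) 1) :
    (x:ℂ) ^ ((a:ℂ) - 1) * (1 - (x:ℂ)) ^ ((b:ℂ) - 1)
      = ((x ^ (a-1) * (1-x) ^ (b-1) : ℝ) : ℂ) := by
  have h1 : (0:ℝ) ≤ x := hx.1
  have h2 : (0:ℝ) ≤ 1 - x := by linarith [hx.2]
  push_cast
  rw [Complex.ofReal_cpow h1, Complex.ofReal_cpow h2]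
  push_cast
  ring

lemma realBeta_integrableOn {a b : ℝ} (ha : 0 < a) (hb : 0 < b) :
    IntegrableOn (fun x : ℝ => x ^ (a-1) * (1-x) ^ (b-1)) (Set.Ioo 0 1) := by
  have hc : IntervalIntegrable (fun x : ℝ =>
      (x:ℂ) ^ ((a:ℂ) - 1) * (1 - (x:ℂ)) ^ ((b:ℂ) - 1)) volume 0 1 :=
    Complex.betaIntegral_convergent (by simpa using ha) (by simpa using hb)
  have hIoc : IntegrableOn (fun x : ℝ =>
      (x:ℂ) ^ ((a:ℂ) - 1) * (1 - (x:ℂ)) ^ ((b:ℂ) - 1)) (Set.Ioc 0 1) :=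
    (intervalIntegrable_iff_integrableOn_Ioc_of_le (by norm_num)).mp hc
  have hIoo := hIoc.mono_set Set.Ioo_subset_Ioc_self
  have : IntegrableOn (fun x : ℝ =>
      ((x ^ (a-1) * (1-x) ^ (b-1) : ℝ) : ℂ)) (Set.Ioo 0 1) := by
    refine hIoo.congr_fun (fun x hx => beta_fun_eq a b x ?_) measurableSet_Ioo
    exact ⟨hx.1.le, hx.2.le⟩
  simpa [IntegrableOn] using this.re

lemma realBeta_integral {a b : ℝ} (ha : 0 < a) (hb : 0 < b) :
    ∫ x in Set.Ioo (0:ℝ) 1, x ^ (a-1) * (1-x) ^ (b-1) = realBeta a b := by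
  have hG : Complex.Gamma a * Complex.Gamma b
      = Complex.Gamma ((a:ℂ) + b) * Complex.betaIntegral a b :=
    Complex.Gamma_mul_Gamma_eq_betaIntegral (by simpa using ha) (by simpa using hb)
  have hbeta : Complex.betaIntegral a b
      = ((∫ x in Set.Ioo (0:ℝ) 1, x ^ (a-1) * (1-x) ^ (b-1) : ℝ) : ℂ) := by
    rw [Complex.betaIntegral, intervalIntegral.integral_of_le (by norm_num : (0:ℝ) ≤ 1),
      ← MeasureTheory.integral_Ioc_eq_integral_Ioo (f := fun x : ℝ => x ^ (a-1) * (1-x) ^ (b-1))]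
    rw [show (∫ x in Set.Ioc (0:ℝ) 1, (x:ℂ) ^ ((a:ℂ) - 1) * (1 - (x:ℂ)) ^ ((b:ℂ) - 1))
        = ∫ x in Set.Ioc (0:ℝ) 1, ((x ^ (a-1) * (1-x) ^ (b-1) : ℝ) : ℂ) from
      setIntegral_congr_fun measurableSet_Ioc (fun x hx => beta_fun_eq a b x ⟨hx.1.le, hx.2⟩)]
    exact integral_ofReal
  rw [hbeta, Complex.Gamma_ofReal, Complex.Gamma_ofReal, ← Complex.ofReal_add,
    Complex.Gamma_ofReal] at hG
  have hGpos : (0:ℝ) < Real.Gamma (a + b) := Real.Gamma_pos_of_pos (by linarith)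
  have : (Real.Gamma a * Real.Gamma b : ℝ)
      = Real.Gamma (a+b) * ∫ x in Set.Ioo (0:ℝ) 1, x ^ (a-1) * (1-x) ^ (b-1) := by
    exact_mod_cast hG
  rw [realBeta, this]
  field_simp

lemma genGamma_pos {β : ℝ} (hβ : -(1/2) < β) (n : ℕ) : 0 < genGamma β n := by
  induction n with
  | zero => norm_num [genGamma]
  | succ n ih =>
    rw [genGamma]
    apply mul_pos _ ih
    rcases Nat.even_or_odd (n+1) with h | h
    · rw [Nat.even_iff] at h
      simp only [h]
      norm_num
      positivity
    · rw [Nat.odd_iff] at h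
      simp only [h]
      norm_num
      push_cast
      linarith [Nat.cast_nonneg (α := ℝ) n]

lemma genGamma_key (μ α : ℝ) (hμ : 0 < μ) (hα : -(1/2) < α) (n : ℕ) :
    genGamma α n * Real.Gamma (((n+1)/2 : ℕ) + (μ + α) + 1/2) * Real.Gamma (α + 1/2)
      = genGamma (μ + α) n * Real.Gamma (((n+1)/2 : ℕ) + α + 1/2)
          * Real.Gamma (μ + α + 1/2) := by
  induction n with
  | zero => simp [genGamma]; ring
  | succ n ih =>
    rcases Nat.even_or_odd (n+1) with h | h
    · -- n+1 even, n odd: k unchanged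
      obtain ⟨m, hm⟩ := h
      have hk : (n+1+1)/2 = (n+1)/2 := by omega
      have hmod : (n+1) % 2 = 0 := by omega
      rw [genGamma, genGamma, hmod, hk]
      norm_num
      linear_combination ((n:ℝ)+1) * ih
    · -- n+1 odd, n even = 2m, k goes m → m+1
      obtain ⟨m, hm⟩ := h
      have hk1 : (n+1)/2 = m := by omega
      have hk2 : (n+1+1)/2 = m + 1 := by omega
      have hmod : (n+1) % 2 = 1 := by omega
      rw [genGamma, genGamma, hmod, hk2]
      rw [hk1] at ih
      simp only [if_pos rfl, mul_one]
      push_cast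
      have hg1 : Real.Gamma ((m:ℝ) + 1 + (μ + α) + 1/2)
          = ((m:ℝ) + (μ + α) + 1/2) * Real.Gamma ((m:ℝ) + (μ + α) + 1/2) := by
        rw [show (m:ℝ) + 1 + (μ + α) + 1/2 = ((m:ℝ) + (μ + α) + 1/2) + 1 by ring,
          Real.Gamma_add_one (ne_of_gt (by have := Nat.cast_nonneg (α:=ℝ) m; linarith : (0:ℝ) < (m:ℝ) + (μ + α) + 1/2))]
      have hg2 : Real.Gamma ((m:ℝ) + 1 + α + 1/2)
          = ((m:ℝ) + α + 1/2) * Real.Gamma ((m:ℝ) + α + 1/2) := by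
        rw [show (m:ℝ) + 1 + α + 1/2 = ((m:ℝ) + α + 1/2) + 1 by ring,
          Real.Gamma_add_one (ne_of_gt (by have := Nat.cast_nonneg (α:=ℝ) m; linarith : (0:ℝ) < (m:ℝ) + α + 1/2))]
      rw [hg1, hg2]
      have hn : (n:ℝ) = 2*(m:ℝ) := by exact_mod_cast congrArg (fun x : ℕ => (x:ℝ)) (by omega : n = 2*m)
      rw [hn]
      linear_combination (2*((m:ℝ)+α+1/2)*((m:ℝ)+(μ+α)+1/2)) * ih

section Main
variable {μ α : ℝ} (hμ : 0 < μ) (hα : -(1/2) < α) (n : ℕ)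

lemma prod4_le {a b c d a' c' d' : ℝ} (ha : 0 ≤ a) (hb : 0 ≤ b) (hc : 0 ≤ c) (hd : 0 ≤ d)
    (h1 : a ≤ a') (h3 : c ≤ c') (h4 : d ≤ d') : a*b*c*d ≤ a'*b*c'*d' := by
  have hab : a*b ≤ a'*b := mul_le_mul_of_nonneg_right h1 hb
  have h2 : a*b*c ≤ a'*b*c' :=
    mul_le_mul hab h3 hc (mul_nonneg (ha.trans h1) hb)
  exact mul_le_mul h2 h4 hd (mul_nonneg (mul_nonneg (ha.trans h1) hb) (hc.trans h3))

lemma F_meas : Measurable (fun t : ℝ => t ^ n * |t| ^ (2*α) * (1-t) ^ (μ-1) * (1+t) ^ μ) := by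
  fun_prop

include hμ hα in
lemma bound_int : IntegrableOn (fun t : ℝ =>
    (2^μ + 2^(μ-1) + 1) * (t ^ (2*α) * (1-t) ^ (μ-1))) (Set.Ioo 0 1) := by
  have := (realBeta_integrableOn (a := 2*α+1) (b := μ) (by linarith) hμ).const_mul
    ((2:ℝ)^μ + 2^(μ-1) + 1)
  simpa [IntegrableOn] using this

include hμ hα in
lemma F_int_pos : IntegrableOn (fun t : ℝ => t ^ n * |t| ^ (2*α) * (1-t) ^ (μ-1) * (1+t) ^ μ)
    (Set.Ioo 0 1) := by
  refine Integrable.mono' (bound_int hμ hα) ((F_meas n).aestronglyMeasurable.restrict) ?_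
  rw [ae_restrict_iff' measurableSet_Ioo]
  filter_upwards with t ht
  obtain ⟨ht0, ht1⟩ := ht
  have h1t : (0:ℝ) < 1 - t := by linarith
  have habs : |t| = t := abs_of_pos ht0
  rw [habs]
  have hnn : (0:ℝ) ≤ t ^ n * t ^ (2*α) * (1-t) ^ (μ-1) * (1+t) ^ μ := by
    apply mul_nonneg; apply mul_nonneg; apply mul_nonneg
    · positivity
    · exact Real.rpow_nonneg ht0.le _
    · exact Real.rpow_nonneg h1t.le _
    · exact Real.rpow_nonneg (by linarith) _
  rw [Real.norm_eq_abs, abs_of_nonneg hnn]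
  have key : t ^ n * t ^ (2*α) * (1-t) ^ (μ-1) * (1+t) ^ μ
      ≤ 1 * t ^ (2*α) * (1-t) ^ (μ-1) * (2^μ + 2^(μ-1) + 1) := by
    have h4 : (1+t) ^ μ ≤ 2^μ + 2^(μ-1) + 1 := by
      have : (1+t) ^ μ ≤ (2:ℝ) ^ μ := Real.rpow_le_rpow (by linarith) (by linarith) hμ.le
      have h2 : (0:ℝ) < (2:ℝ)^(μ-1) := Real.rpow_pos_of_pos (by norm_num) _
      linarith
    have := prod4_le (a := t^n) (b := t^(2*α)) (c := (1-t)^(μ-1)) (d := (1+t)^μ)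
      (pow_nonneg ht0.le n) (Real.rpow_nonneg ht0.le _) (Real.rpow_nonneg h1t.le _)
      (Real.rpow_nonneg (by linarith) _)
      (pow_le_one₀ ht0.le ht1.le) le_rfl h4
    linarith [this]
  calc t ^ n * t ^ (2*α) * (1-t) ^ (μ-1) * (1+t) ^ μ
      ≤ 1 * t ^ (2*α) * (1-t) ^ (μ-1) * (2^μ + 2^(μ-1) + 1) := key
    _ = (2^μ + 2^(μ-1) + 1) * (t ^ (2*α) * (1-t) ^ (μ-1)) := by ring

include hμ hα in
lemma F_int_neg : IntegrableOn (fun t : ℝ =>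
    (-t) ^ n * |(-t)| ^ (2*α) * (1-(-t)) ^ (μ-1) * (1+(-t)) ^ μ) (Set.Ioo 0 1) := by
  refine Integrable.mono' (bound_int hμ hα) ?_ ?_
  · exact ((F_meas n).comp measurable_neg).aestronglyMeasurable.restrict
  rw [ae_restrict_iff' measurableSet_Ioo]
  filter_upwards with t ht
  obtain ⟨ht0, ht1⟩ := ht
  have h1t : (0:ℝ) < 1 - t := by linarith
  have habs : |(-t)| = t := by rw [abs_neg, abs_of_pos ht0]
  rw [habs]
  have hC1 : (1+t) ^ (μ-1) ≤ 2^μ + 2^(μ-1) + 1 := by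
    have h2 : (0:ℝ) < (2:ℝ)^μ := Real.rpow_pos_of_pos (by norm_num) _
    rcases le_or_gt 0 (μ-1) with h | h
    · have : (1+t) ^ (μ-1) ≤ (2:ℝ) ^ (μ-1) := Real.rpow_le_rpow (by linarith) (by linarith) h
      linarith
    · have : (1+t) ^ (μ-1) ≤ 1 := Real.rpow_le_one_of_one_le_of_nonpos (by linarith) h.le
      have h3 : (0:ℝ) < (2:ℝ)^(μ-1) := Real.rpow_pos_of_pos (by norm_num) _
      linarith
  have h1m : (1-t) ^ μ ≤ (1-t) ^ (μ-1) := by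
    have h := Real.rpow_add_one (ne_of_gt h1t) (μ-1)
    rw [show μ - 1 + 1 = μ by ring] at h
    rw [h]
    nlinarith [Real.rpow_nonneg h1t.le (μ-1)]
  have hnorm : ‖(-t) ^ n * t ^ (2*α) * (1-(-t)) ^ (μ-1) * (1+(-t)) ^ μ‖
      = t ^ n * t ^ (2*α) * (1+t) ^ (μ-1) * (1-t) ^ μ := by
    rw [Real.norm_eq_abs, abs_mul, abs_mul, abs_mul, abs_pow, abs_neg, abs_of_pos ht0,
      abs_of_nonneg (Real.rpow_nonneg ht0.le _),
      abs_of_nonneg (Real.rpow_nonneg (by linarith : (0:ℝ) ≤ 1 - (-t)) _),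
      abs_of_nonneg (Real.rpow_nonneg (by linarith : (0:ℝ) ≤ 1 + (-t)) _)]
    ring_nf
  rw [hnorm]
  have := prod4_le (a := t^n) (b := t^(2*α)) (c := (1+t)^(μ-1)) (d := (1-t)^μ)
    (pow_nonneg ht0.le n) (Real.rpow_nonneg ht0.le _)
    (Real.rpow_nonneg (by linarith) _) (Real.rpow_nonneg h1t.le _)
    (pow_le_one₀ ht0.le ht1.le) hC1 h1m
  calc t ^ n * t ^ (2*α) * (1+t) ^ (μ-1) * (1-t) ^ μ
      ≤ 1 * t ^ (2*α) * (2^μ + 2^(μ-1) + 1) * (1-t) ^ (μ-1) := this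
    _ = (2^μ + 2^(μ-1) + 1) * (t ^ (2*α) * (1-t) ^ (μ-1)) := by ring

end Main

section Main2
variable {μ α : ℝ} (hμ : 0 < μ) (hα : -(1/2) < α) (n : ℕ)

lemma sq_image : (fun s : ℝ => s^2) '' Set.Ioo 0 1 = Set.Ioo 0 1 := by
  ext u
  constructor
  · rintro ⟨s, ⟨hs0, hs1⟩, rfl⟩
    simp only [Set.mem_Ioo]
    exact ⟨by positivity, by nlinarith⟩
  · rintro ⟨hu0, hu1⟩
    refine ⟨Real.sqrt u, ⟨Real.sqrt_pos.mpr hu0, ?_⟩, Real.sq_sqrt hu0.le⟩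
    rw [show (1:ℝ) = Real.sqrt 1 by simp]
    exact Real.sqrt_lt_sqrt hu0.le hu1

lemma sq_injOn : Set.InjOn (fun s : ℝ => s^2) (Set.Ioo 0 1) := by
  rintro a ⟨ha, _⟩ b ⟨hb, _⟩ h
  simp only at h
  exact le_antisymm (by nlinarith) (by nlinarith)

lemma neg_image : (Neg.neg '' Set.Ioo (0:ℝ) 1) = Set.Ioo (-1) 0 := by
  ext x
  constructor
  · rintro ⟨s, ⟨hs0, hs1⟩, rfl⟩
    exact ⟨by linarith, by linarith⟩
  · rintro ⟨hx0, hx1⟩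
    exact ⟨-x, ⟨by linarith, by linarith⟩, by ring⟩

include hμ hα in
lemma pointwise_eq {s : ℝ} (hs : s ∈ Set.Ioo (0:ℝ) 1) :
    (s ^ n * |s| ^ (2*α) * (1-s) ^ (μ-1) * (1+s) ^ μ)
      + ((-s) ^ n * |(-s)| ^ (2*α) * (1-(-s)) ^ (μ-1) * (1+(-s)) ^ μ)
    = |2*s| * ((s^2) ^ ((((n+1)/2 : ℕ) : ℝ) + α + 1/2 - 1) * (1-s^2) ^ (μ-1)) := by
  obtain ⟨hs0, hs1⟩ := hs
  have h1m : (0:ℝ) < 1 - s := by linarith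
  have h1p : (0:ℝ) < 1 + s := by linarith
  set k : ℕ := (n+1)/2 with hk
  have habs : |s| = s := abs_of_pos hs0
  have habs2 : |(-s)| = s := by rw [abs_neg, habs]
  have habs3 : |2*s| = 2*s := abs_of_pos (by linarith)
  have e1 : (1+s) ^ μ = (1+s) ^ (μ-1) * (1+s) := by
    have h := Real.rpow_add_one (ne_of_gt h1p) (μ-1)
    rw [show μ - 1 + 1 = μ by ring] at h
    rw [h]
  have e2 : (1-s) ^ μ = (1-s) ^ (μ-1) * (1-s) := by
    have h := Real.rpow_add_one (ne_of_gt h1m) (μ-1)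
    rw [show μ - 1 + 1 = μ by ring] at h
    rw [h]
  have e3 : (1-s) ^ (μ-1) * (1+s) ^ (μ-1) = (1-s^2) ^ (μ-1) := by
    rw [← Real.mul_rpow h1m.le h1p.le, show (1-s)*(1+s) = 1 - s^2 by ring]
  have e5 : (s^2 : ℝ) ^ (((k:ℝ)) + α + 1/2 - 1) = s ^ (2*(((k:ℝ)) + α + 1/2 - 1)) := by
    rw [← Real.rpow_natCast s 2, ← Real.rpow_mul hs0.le]
    norm_num
  have hR : |2*s| * ((s^2) ^ (((k:ℝ)) + α + 1/2 - 1) * (1-s^2) ^ (μ-1))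
      = 2 * s ^ (2*(k:ℝ) + 2*α) * (1-s^2) ^ (μ-1) := by
    rw [habs3, e5]
    have h := Real.rpow_add_one (ne_of_gt hs0) (2*(((k:ℝ)) + α + 1/2 - 1))
    rw [show 2*(((k:ℝ)) + α + 1/2 - 1) + 1 = 2*(k:ℝ) + 2*α by ring] at h
    rw [h]
    ring
  rw [hR, habs, habs2, show (1:ℝ) - -s = 1 + s by ring, show (1:ℝ) + -s = 1 - s by ring]
  rcases Nat.even_or_odd n with ⟨m, hm⟩ | ⟨m, hm⟩
  · have hkm : k = m := by omega
    have hep : s ^ (2*(k:ℝ) + 2*α) = s ^ ((n:ℝ)) * s ^ (2*α) := by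
      rw [← Real.rpow_add hs0, hkm]
      have hn2 : (n:ℝ) = 2*(m:ℝ) := by exact_mod_cast congrArg (fun x : ℕ => (x:ℝ)) (by omega : n = 2*m)
      congr 1
      linarith [hn2]
    have hneg : (-s) ^ n = s ^ n := (Even.neg_pow ⟨m, hm⟩ s)
    rw [hneg, hep, e1, e2, ← Real.rpow_natCast s n]
    linear_combination (2 * (s ^ ((n:ℝ)) * s ^ (2*α))) * e3
  · have hkm : k = m + 1 := by omega
    have hep : s ^ (2*(k:ℝ) + 2*α) = s ^ ((n:ℝ)) * s ^ (2*α) * s := by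
      have h := Real.rpow_add_one (ne_of_gt hs0) ((n:ℝ) + 2*α)
      have hn : 2*(k:ℝ) + 2*α = ((n:ℝ) + 2*α) + 1 := by
        have : (n:ℝ) = 2*(m:ℝ)+1 := by exact_mod_cast congrArg (fun x : ℕ => (x:ℝ)) (by omega : n = 2*m+1)
        rw [hkm]; push_cast; linarith
      rw [hn, h, Real.rpow_add hs0]
    have hneg : (-s) ^ n = -(s ^ n) := (Odd.neg_pow ⟨m, hm⟩ s)
    rw [hneg, hep, e1, e2, ← Real.rpow_natCast s n]
    linear_combination (2 * (s ^ ((n:ℝ)) * s ^ (2*α) * s)) * e3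

end Main2

section Main3
variable {μ α : ℝ} (hμ : 0 < μ) (hα : -(1/2) < α) (n : ℕ)

include hμ hα in
lemma integral_eval :
    (∫ t in (-1:ℝ)..1, t ^ n * |t| ^ (2*α) * (1-t) ^ (μ-1) * (1+t) ^ μ)
      = realBeta ((((n+1)/2 : ℕ) : ℝ) + α + 1/2) μ := by
  set F : ℝ → ℝ := fun t => t ^ n * |t| ^ (2*α) * (1-t) ^ (μ-1) * (1+t) ^ μ with hF
  have hFneg : IntegrableOn (fun s : ℝ => F (-s)) (Set.Ioo 0 1) := by
    have := F_int_neg hμ hα n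
    simpa [hF] using this
  have hFpos : IntegrableOn F (Set.Ioo 0 1) := F_int_pos hμ hα n
  -- step 1: interval to set integral over union
  rw [intervalIntegral.integral_of_le (by norm_num : (-1:ℝ) ≤ 1)]
  have hsets : (Set.Ioc (-1:ℝ) 1 : Set ℝ) =ᵐ[volume] ((Set.Ioo (-1:ℝ) 0 ∪ Set.Ioo 0 1 : Set ℝ)) := by
    rw [MeasureTheory.ae_eq_set]
    constructor
    · refine measure_mono_null (?_ : _ ⊆ ({0, 1} : Set ℝ)) ?_
      · rintro x ⟨⟨hx1, hx2⟩, hx3⟩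
        simp only [Set.mem_union, Set.mem_Ioo, not_or, not_and] at hx3
        simp only [Set.mem_insert_iff, Set.mem_singleton_iff]
        by_contra hc
        push_neg at hc
        obtain ⟨h0, h1⟩ := hc
        rcases lt_trichotomy x 0 with h | h | h
        · exact absurd (hx3.1 hx1) (by simpa using h)
        · exact h0 h
        · exact absurd (hx3.2 h) (by simpa using lt_of_le_of_ne hx2 h1)
      · exact (Set.toFinite _).measure_zero volume
    · refine measure_mono_null (?_ : _ ⊆ (∅ : Set ℝ)) (by simp)
      rintro x ⟨hx1, hx2⟩
      rcases hx1 with ⟨h1, h2⟩ | ⟨h1, h2⟩ <;> exact hx2 ⟨by linarith, by linarith⟩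
  rw [setIntegral_congr_set hsets]
  -- step 2: integrability on Ioo (-1) 0 and split
  have hderiv_neg : ∀ x ∈ Set.Ioo (0:ℝ) 1,
      HasDerivWithinAt (Neg.neg : ℝ → ℝ) (-1) (Set.Ioo 0 1) x :=
    fun x _ => (hasDerivAt_neg x).hasDerivWithinAt
  have hFneg' : IntegrableOn F (Set.Ioo (-1) 0) := by
    rw [← neg_image]
    rw [integrableOn_image_iff_integrableOn_abs_deriv_smul measurableSet_Ioo hderiv_neg
      (neg_injective.injOn) F]
    simpa using hFneg
  rw [setIntegral_union (by rw [Set.disjoint_left]; rintro x ⟨_, h0⟩ ⟨h0', _⟩; linarith)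
    measurableSet_Ioo hFneg' hFpos]
  -- step 3: reflect
  have hrefl : ∫ x in Set.Ioo (-1:ℝ) 0, F x = ∫ s in Set.Ioo (0:ℝ) 1, F (-s) := by
    rw [← neg_image, integral_image_eq_integral_abs_deriv_smul measurableSet_Ioo hderiv_neg
      (neg_injective.injOn) F]
    simp
  rw [hrefl, ← integral_add hFneg hFpos]
  -- step 4: pointwise identity
  have hcong : ∫ s in Set.Ioo (0:ℝ) 1, (F (-s) + F s)
      = ∫ s in Set.Ioo (0:ℝ) 1,
          |2*s| • ((s^2) ^ ((((n+1)/2 : ℕ) : ℝ) + α + 1/2 - 1) * (1-s^2) ^ (μ-1)) := by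
    refine setIntegral_congr_fun measurableSet_Ioo (fun s hs => ?_)
    have := pointwise_eq hμ hα n hs
    simp only [hF, smul_eq_mul]
    linarith [this]
  rw [hcong]
  -- step 5: substitution u = s^2
  have hderiv_sq : ∀ x ∈ Set.Ioo (0:ℝ) 1,
      HasDerivWithinAt (fun s : ℝ => s^2) (2*x) (Set.Ioo 0 1) x := by
    intro x _
    simpa using (hasDerivAt_pow 2 x).hasDerivWithinAt
  have hsub := integral_image_eq_integral_abs_deriv_smul measurableSet_Ioo hderiv_sq sq_injOn
    (fun u => u ^ ((((n+1)/2 : ℕ) : ℝ) + α + 1/2 - 1) * (1-u) ^ (μ-1))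
  rw [sq_image] at hsub
  rw [← hsub]
  exact realBeta_integral (by have := Nat.cast_nonneg (α := ℝ) ((n+1)/2); linarith) hμ

end Main3

set_option maxHeartbeats 1000000 in
/-- For `μ > 0`, `α > -1/2`, `n ∈ ℕ`:
`γ_α(n)/γ_{μ+α}(n) = (1/B(α+1/2, μ)) ∫_{-1}^1 t^n |t|^{2α} (1-t)^{μ-1} (1+t)^μ dt`. -/
theorem genGamma_ratio_integral (μ α : ℝ) (hμ : 0 < μ) (hα : -(1/2) < α) (n : ℕ) :
    genGamma α n / genGamma (μ + α) n =
      (1 / realBeta (α + 1/2) μ) *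
        ∫ t in (-1 : ℝ)..1, t ^ n * |t| ^ (2 * α) * (1 - t) ^ (μ - 1) * (1 + t) ^ μ := by
  rw [integral_eval hμ hα n]
  set k : ℕ := (n+1)/2 with hk
  have key := genGamma_key μ α hμ hα n
  rw [← hk] at key
  have hknn : (0:ℝ) ≤ (k:ℝ) := Nat.cast_nonneg k
  have hga : 0 < genGamma α n := genGamma_pos hα n
  have hgma : 0 < genGamma (μ + α) n := genGamma_pos (by linarith) n
  have hG1 : 0 < Real.Gamma (α + 1/2) := Real.Gamma_pos_of_pos (by linarith)
  have hG2 : 0 < Real.Gamma (μ + α + 1/2) := Real.Gamma_pos_of_pos (by linarith)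
  have hG3 : 0 < Real.Gamma μ := Real.Gamma_pos_of_pos hμ
  have hG4 : 0 < Real.Gamma ((k:ℝ) + α + 1/2) := Real.Gamma_pos_of_pos (by linarith)
  have hG5 : 0 < Real.Gamma ((k:ℝ) + (μ + α) + 1/2) := Real.Gamma_pos_of_pos (by linarith)
  rw [realBeta, realBeta, show (k:ℝ) + α + 1/2 + μ = (k:ℝ) + (μ + α) + 1/2 by ring,
    show α + 1/2 + μ = μ + α + 1/2 by ring]
  have h2 : genGamma α n / genGamma (μ + α) n
      = (Real.Gamma ((k:ℝ) + α + 1/2) * Real.Gamma (μ + α + 1/2))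
          / (Real.Gamma (α + 1/2) * Real.Gamma ((k:ℝ) + (μ + α) + 1/2)) := by
    rw [div_eq_div_iff hgma.ne' (by positivity)]
    linear_combination key
  rw [h2]
  rw [one_div_div, div_mul_div_comm,
    div_eq_div_iff (mul_pos hG1 hG5).ne' (mul_pos (mul_pos hG1 hG3) hG5).ne']
  ring
end

section
/- Let μ > 0, α > −1/2 and x ∈ ℂ. Then e_{μ+α}(x) = (1/B(α + 1/2, μ)) ∫_{−1}^{1} e_α(x t) |t|^{2α} (1−t)^{μ−1} (1+t)^{μ} dt. -/
open MeasureTheory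
open scoped BigOperators Nat

open Set

section SonineAux

lemma genGamma_pos_s1 {μ : ℝ} (hμ : -(1/2) < μ) : ∀ n, 0 < genGamma μ n
  | 0 => one_pos
  | n + 1 => by
    rw [genGamma]
    have := genGamma_pos_s1 hμ n
    split <;> nlinarith [Nat.cast_nonneg (α := ℝ) n]

lemma le_genGamma {μ : ℝ} (hμ : -(1/2) < μ) :
    ∀ n, (min 1 (1 + 2*μ))^n * n ! ≤ genGamma μ n
  | 0 => by simp [genGamma]
  | n + 1 => by
    have ih := le_genGamma hμ n
    have hδ0 : 0 < min 1 (1 + 2*μ) := lt_min one_pos (by linarith)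
    have hδn : 0 ≤ (min 1 (1 + 2*μ))^n := le_of_lt (pow_pos hδ0 n)
    have hfac : (0:ℝ) < n ! := by positivity
    rw [genGamma]
    have hkey : min 1 (1 + 2*μ) * ((n:ℝ) + 1) ≤
        (n : ℝ) + 1 + 2 * μ * (if (n + 1) % 2 = 1 then (1 : ℝ) else 0) := by
      have hn : (0:ℝ) ≤ n := Nat.cast_nonneg n
      split
      · rcases le_total μ 0 with h | h
        · have : min 1 (1 + 2*μ) = 1 + 2*μ := min_eq_right (by linarith)
          rw [this]; nlinarith
        · have h1 : min 1 (1 + 2*μ) ≤ 1 := min_le_left _ _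
          nlinarith
      · have h1 : min 1 (1 + 2*μ) ≤ 1 := min_le_left _ _
        nlinarith
    calc (min 1 (1 + 2*μ))^(n+1) * (n+1)!
        = (min 1 (1 + 2*μ) * ((n:ℝ)+1)) * ((min 1 (1 + 2*μ))^n * n !) := by
          rw [Nat.factorial_succ]; push_cast; ring
      _ ≤ ((n : ℝ) + 1 + 2 * μ * (if (n + 1) % 2 = 1 then (1 : ℝ) else 0)) * genGamma μ n := by
          have hn1 : (0:ℝ) < min 1 (1 + 2*μ) * ((n:ℝ)+1) := by positivity
          exact mul_le_mul hkey ih (by positivity) (le_trans hn1.le hkey)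

lemma summable_div_genGamma {μ : ℝ} (hμ : -(1/2) < μ) {r : ℝ} (hr : 0 ≤ r) :
    Summable (fun n => r^n / genGamma μ n) := by
  set δ := min 1 (1 + 2*μ) with hδ
  have hδ0 : 0 < δ := lt_min one_pos (by linarith)
  refine Summable.of_nonneg_of_le
    (fun n => div_nonneg (pow_nonneg hr n) (genGamma_pos_s1 hμ n).le)
    (fun n => ?_) (Real.summable_pow_div_factorial (r/δ))
  rw [div_pow, div_div]
  gcongr
  · exact le_genGamma hμ n

lemma realBeta_pos {a b : ℝ} (ha : 0 < a) (hb : 0 < b) : 0 < realBeta a b := by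
  unfold realBeta
  have := Real.Gamma_pos_of_pos ha
  have := Real.Gamma_pos_of_pos hb
  have := Real.Gamma_pos_of_pos (by linarith : (0:ℝ) < a + b)
  positivity

lemma realBeta_add_one {a b : ℝ} (ha : 0 < a) (hb : 0 < b) :
    realBeta (a + 1) b = (a / (a + b)) * realBeta a b := by
  unfold realBeta
  rw [Real.Gamma_add_one (by positivity), show a + 1 + b = (a + b) + 1 by ring,
    Real.Gamma_add_one (by positivity)]
  have h1 : Real.Gamma (a+b) ≠ 0 := (Real.Gamma_pos_of_pos (by linarith)).ne'
  have h2 : a + b ≠ 0 := by positivity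
  field_simp

lemma beta_pointwise {a b x : ℝ} (hx : x ∈ Ioo (0:ℝ) 1) :
    (x:ℂ)^((a:ℂ)-1) * ((1:ℂ)-(x:ℂ))^((b:ℂ)-1) = ((x^(a-1)*(1-x)^(b-1) : ℝ) : ℂ) := by
  have h1 : ((a:ℂ)-1) = ((a-1 : ℝ):ℂ) := by push_cast; ring
  have h2 : ((b:ℂ)-1) = ((b-1 : ℝ):ℂ) := by push_cast; ring
  have h3 : ((1:ℂ) - (x:ℂ)) = ((1-x:ℝ):ℂ) := by push_cast; ring
  rw [h1, h2, h3, ← Complex.ofReal_cpow hx.1.le, ← Complex.ofReal_cpow (by linarith [hx.2]),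
    ← Complex.ofReal_mul]

lemma betaIntegrand_integrableOn {a b : ℝ} (ha : 0 < a) (hb : 0 < b) :
    IntegrableOn (fun s : ℝ => s^(a-1) * (1-s)^(b-1)) (Ioo (0:ℝ) 1) := by
  have h := Complex.betaIntegral_convergent (u := (a:ℂ)) (v := (b:ℂ)) (by simpa) (by simpa)
  rw [intervalIntegrable_iff, uIoc_of_le zero_le_one] at h
  have h2 := (h.mono_set Ioo_subset_Ioc_self).re
  refine (integrableOn_congr_fun (fun x hx => ?_) measurableSet_Ioo).mpr h2
  rw [beta_pointwise hx]; simp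

lemma betaIntegral_real {a b : ℝ} (ha : 0 < a) (hb : 0 < b) :
    ∫ s in Ioo (0:ℝ) 1, s^(a-1) * (1-s)^(b-1) = realBeta a b := by
  have key : Complex.betaIntegral a b
      = ((∫ s in Ioo (0:ℝ) 1, s^(a-1)*(1-s)^(b-1) : ℝ) : ℂ) := by
    rw [Complex.betaIntegral, intervalIntegral.integral_of_le zero_le_one,
      integral_Ioc_eq_integral_Ioo,
      setIntegral_congr_fun measurableSet_Ioo (fun x hx => beta_pointwise hx)]
    exact integral_ofReal
  have h := Complex.Gamma_mul_Gamma_eq_betaIntegral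
    (s := (a:ℂ)) (t := (b:ℂ)) (by simpa) (by simpa)
  rw [key] at h
  have hab : ((a:ℂ) + b) = ((a+b : ℝ):ℂ) := by push_cast; ring
  rw [hab, Complex.Gamma_ofReal, Complex.Gamma_ofReal, Complex.Gamma_ofReal,
    ← Complex.ofReal_mul, ← Complex.ofReal_mul] at h
  have h' := Complex.ofReal_inj.mp h
  have hG : Real.Gamma (a+b) ≠ 0 := (Real.Gamma_pos_of_pos (by linarith)).ne'
  unfold realBeta
  rw [eq_div_iff hG, h']
  ring

lemma sq_stuff :
    ((fun t : ℝ => t*t) '' Ioo 0 1 = Ioo 0 1) ∧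
    (∀ x ∈ Ioo (0:ℝ) 1, HasDerivWithinAt (fun t : ℝ => t*t) (2*x) (Ioo 0 1) x) ∧
    InjOn (fun t : ℝ => t*t) (Ioo 0 1) := by
  refine ⟨?_, fun x hx => ?_, fun u hu v hv h => ?_⟩
  · ext y
    constructor
    · rintro ⟨t, ht, rfl⟩
      refine ⟨mul_pos ht.1 ht.1, ?_⟩
      show t*t < 1
      nlinarith [ht.1, ht.2]
    · intro hy
      refine ⟨Real.sqrt y, ⟨Real.sqrt_pos.mpr hy.1, ?_⟩, Real.mul_self_sqrt hy.1.le⟩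
      nlinarith [Real.sq_sqrt hy.1.le, Real.sqrt_nonneg y, hy.2]
  · have : HasDerivAt (fun t : ℝ => t*t) (2*x) x := by
      simpa [two_mul, Pi.mul_def] using (hasDerivAt_id x).mul (hasDerivAt_id x)
    exact this.hasDerivWithinAt
  · simp only at h
    have hu1 := hu.1; have hv1 := hv.1
    nlinarith [sq_nonneg (u - v), sq_nonneg (u + v)]

lemma K_lemma {q μ : ℝ} (hq : -1 < q) (hμ : 0 < μ) :
    IntegrableOn (fun t : ℝ => t^q * (1-t*t)^(μ-1)) (Ioo (0:ℝ) 1) ∧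
    ∫ t in Ioo (0:ℝ) 1, t^q * (1-t*t)^(μ-1) = realBeta ((q+1)/2) μ / 2 := by
  obtain ⟨himg, hderiv, hinj⟩ := sq_stuff
  have ha : 0 < (q+1)/2 := by linarith
  set g : ℝ → ℝ := fun s => s^((q+1)/2-1) * (1-s)^(μ-1) with hg
  have hpt : ∀ x ∈ Ioo (0:ℝ) 1, |2*x| • g (x*x) = 2 * (x^q * (1-x*x)^(μ-1)) := by
    intro x hx
    have hx0 : (0:ℝ) < x := hx.1
    have h1 : |2*x| = 2*x := abs_of_pos (by linarith)
    have h2 : (x*x)^((q+1)/2-1) = x^(q-1) := by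
      rw [show x*x = x^(2:ℝ) by rw [Real.rpow_two]; ring, ← Real.rpow_mul hx0.le]
      norm_num
      ring_nf
    have h3 : x * x^(q-1) = x^q := by
      rw [show q = (q-1)+1 by ring, Real.rpow_add_one hx0.ne']; ring
    rw [hg]
    simp only [smul_eq_mul, h1, h2]
    rw [show 2*x*(x^(q-1)*(1-x*x)^(μ-1)) = 2*((x*x^(q-1))*(1-x*x)^(μ-1)) by ring, h3]
  have hiff := integrableOn_image_iff_integrableOn_abs_deriv_smul
    measurableSet_Ioo hderiv hinj g
  rw [himg] at hiff
  have hgi : IntegrableOn g (Ioo (0:ℝ) 1) := betaIntegrand_integrableOn ha hμ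
  have hint2 : IntegrableOn (fun x : ℝ => 2 * (x^q * (1-x*x)^(μ-1))) (Ioo (0:ℝ) 1) :=
    ((hiff.mp hgi).congr_fun hpt measurableSet_Ioo)
  constructor
  · have h5 : IntegrableOn (fun x : ℝ => (1/2) * (2 * (x^q * (1-x*x)^(μ-1)))) (Ioo (0:ℝ) 1) :=
      hint2.const_mul (1/2)
    exact h5.congr_fun (fun x _ => by ring) measurableSet_Ioo
  · have hval := integral_image_eq_integral_abs_deriv_smul measurableSet_Ioo hderiv hinj g
    rw [himg, setIntegral_congr_fun measurableSet_Ioo hpt, integral_const_mul] at hval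
    have hbeta : ∫ s in Ioo (0:ℝ) 1, g s = realBeta ((q+1)/2) μ := betaIntegral_real ha hμ
    rw [hbeta] at hval
    linarith

lemma moment {μ α : ℝ} (hμ : 0 < μ) (hα : -(1/2) < α) (n : ℕ) :
    IntegrableOn (fun t : ℝ => t^n * (|t| ^ (2 * α) * (1 - t) ^ (μ - 1) * (1 + t) ^ μ))
      (Ioo (-1:ℝ) 1) ∧
    ∫ t in Ioo (-1:ℝ) 1, t^n * (|t| ^ (2 * α) * (1 - t) ^ (μ - 1) * (1 + t) ^ μ)
      = realBeta ((((n+1)/2 : ℕ) : ℝ) + (α + 1/2)) μ := by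
  set h : ℝ → ℝ := fun t => t^n * (|t| ^ (2 * α) * (1 - t) ^ (μ - 1) * (1 + t) ^ μ) with hh
  set q : ℝ := (n : ℝ) + 2 * α with hq_def
  have hq : -1 < q := by have : (0:ℝ) ≤ n := Nat.cast_nonneg n; simp only [hq_def]; linarith
  have hq1 : -1 < q + 1 := by linarith
  obtain ⟨K1i, K1v⟩ := K_lemma hq hμ
  obtain ⟨K2i, K2v⟩ := K_lemma hq1 hμ
  -- pointwise identities on (0,1)
  have hsplit : ∀ t ∈ Ioo (0:ℝ) 1,
      t^(n:ℕ) * t ^ (2*α) = t ^ q ∧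
      (1 - t) ^ (μ - 1) * (1 + t) ^ (μ-1) = (1 - t*t) ^ (μ - 1) ∧
      t ^ q * t = t ^ (q+1) := by
    intro t ht
    have ht0 : (0:ℝ) < t := ht.1
    have ht1 : t < 1 := ht.2
    refine ⟨?_, ?_, ?_⟩
    · rw [← Real.rpow_natCast t n, ← Real.rpow_add ht0, hq_def]
    · rw [← Real.mul_rpow (by linarith) (by linarith)]
      congr 1; ring
    · rw [← Real.rpow_add_one ht0.ne']
  have hpos : EqOn (fun t : ℝ => t^q * (1-t*t)^(μ-1) + t^(q+1) * (1-t*t)^(μ-1)) h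
      (Ioo (0:ℝ) 1) := by
    intro t ht
    obtain ⟨e1, e2, e3⟩ := hsplit t ht
    have ht0 : (0:ℝ) < t := ht.1
    simp only [hh]
    rw [abs_of_pos ht0, show (1+t)^μ = (1+t)^(μ-1) * (1+t) by
        rw [← Real.rpow_add_one (ne_of_gt (by linarith : (0:ℝ) < 1+t))]; try norm_num]
    rw [show t^(n:ℕ) * (t ^ (2*α) * (1-t)^(μ-1) * ((1+t)^(μ-1) * (1+t)))
        = (t^(n:ℕ) * t^(2*α)) * ((1-t)^(μ-1) * (1+t)^(μ-1)) * (1+t) by ring, e1, e2]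
    rw [show t^q * (1-t*t)^(μ-1) * (1+t) = t^q*(1-t*t)^(μ-1) + (t^q*t)*(1-t*t)^(μ-1) by ring, e3]
  have hneg : EqOn (fun t : ℝ => ((-1:ℝ))^n * (t^q * (1-t*t)^(μ-1) - t^(q+1) * (1-t*t)^(μ-1)))
      (fun t => h (-t)) (Ioo (0:ℝ) 1) := by
    intro t ht
    obtain ⟨e1, e2, e3⟩ := hsplit t ht
    have ht0 : (0:ℝ) < t := ht.1
    simp only [hh]
    rw [show |(-t)| = t by rw [abs_neg, abs_of_pos ht0]]
    rw [show (1 - (-t)) = 1 + t by ring, show (1 + (-t)) = 1 - t by ring]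
    have ht1 : t < 1 := ht.2
    rw [show (1-t)^μ = (1-t)^(μ-1) * (1-t) by
        rw [← Real.rpow_add_one (ne_of_gt (by linarith : (0:ℝ) < 1-t))]; try norm_num]
    rw [show (-t)^(n:ℕ) = (-1:ℝ)^n * t^n by rw [neg_pow]]
    rw [show (-1:ℝ)^n * t^(n:ℕ) * (t ^ (2*α) * (1+t)^(μ-1) * ((1-t)^(μ-1) * (1-t)))
        = (-1:ℝ)^n * ((t^(n:ℕ) * t^(2*α)) * ((1-t)^(μ-1) * (1+t)^(μ-1)) * (1-t)) by ring, e1, e2]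
    rw [show t^q * (1-t*t)^(μ-1) * (1-t) = t^q*(1-t*t)^(μ-1) - (t^q*t)*(1-t*t)^(μ-1) by ring, e3]
  -- integrability and value on (0,1)
  have hIpos : IntegrableOn h (Ioo (0:ℝ) 1) := by
    have h1 : IntegrableOn (fun t : ℝ => t^q * (1-t*t)^(μ-1) + t^(q+1) * (1-t*t)^(μ-1))
        (Ioo (0:ℝ) 1) := K1i.add K2i
    exact h1.congr_fun hpos measurableSet_Ioo
  have hVpos : ∫ t in Ioo (0:ℝ) 1, h t
      = realBeta ((q+1)/2) μ / 2 + realBeta ((q+1+1)/2) μ / 2 := by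
    rw [← setIntegral_congr_fun measurableSet_Ioo hpos, integral_add K1i K2i, K1v, K2v]
  have hInegIoo : IntegrableOn (fun t => h (-t)) (Ioo (0:ℝ) 1) := by
    have h1 : IntegrableOn
        (fun t : ℝ => ((-1:ℝ))^n * (t^q * (1-t*t)^(μ-1) - t^(q+1) * (1-t*t)^(μ-1)))
        (Ioo (0:ℝ) 1) := (K1i.sub K2i).const_mul _
    exact h1.congr_fun hneg measurableSet_Ioo
  have hVneg : ∫ t in Ioo (0:ℝ) 1, h (-t)
      = (-1:ℝ)^n * (realBeta ((q+1)/2) μ / 2 - realBeta ((q+1+1)/2) μ / 2) := by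
    rw [← setIntegral_congr_fun measurableSet_Ioo hneg, integral_const_mul,
      integral_sub K1i K2i, K1v, K2v]
  -- transfer to (-1,0)
  have hnder : ∀ x ∈ Ioo (0:ℝ) 1, HasDerivWithinAt (fun t : ℝ => -t) (-1 : ℝ) (Ioo 0 1) x :=
    fun x _ => (hasDerivAt_neg x).hasDerivWithinAt
  have hninj : InjOn (fun t : ℝ => -t) (Ioo (0:ℝ) 1) := fun a _ b _ hab => by
    simpa using neg_injective hab
  have himg : (fun t : ℝ => -t) '' Ioo (0:ℝ) 1 = Ioo (-1:ℝ) 0 := by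
    simpa using Set.image_neg_Ioo (a := (0:ℝ)) (b := 1)
  have hiff := integrableOn_image_iff_integrableOn_abs_deriv_smul
    measurableSet_Ioo hnder hninj h
  rw [himg] at hiff
  have hInegset : IntegrableOn h (Ioo (-1:ℝ) 0) := by
    rw [hiff]
    refine hInegIoo.congr_fun (fun x _ => ?_) measurableSet_Ioo
    simp
  have hVnegset : ∫ t in Ioo (-1:ℝ) 0, h t = ∫ t in Ioo (0:ℝ) 1, h (-t) := by
    have := integral_image_eq_integral_abs_deriv_smul measurableSet_Ioo hnder hninj h
    rw [himg] at this
    rw [this]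
    refine setIntegral_congr_fun measurableSet_Ioo (fun x _ => ?_)
    simp
  -- combine
  have hunion : Ioc (-1:ℝ) 0 ∪ Ioo (0:ℝ) 1 = Ioo (-1:ℝ) 1 := by
    ext x
    simp only [mem_union, mem_Ioc, mem_Ioo]
    constructor
    · rintro (⟨h1, h2⟩ | ⟨h1, h2⟩) <;> constructor <;> linarith
    · rintro ⟨h1, h2⟩
      rcases le_or_gt x 0 with h3 | h3
      · exact Or.inl ⟨h1, h3⟩
      · exact Or.inr ⟨h3, h2⟩
  have hdisj : Disjoint (Ioc (-1:ℝ) 0) (Ioo (0:ℝ) 1) := by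
    rw [Set.disjoint_left]
    rintro x ⟨_, h2⟩ ⟨h3, _⟩
    linarith
  have hIoc : IntegrableOn h (Ioc (-1:ℝ) 0) :=
    (integrableOn_Ioc_iff_integrableOn_Ioo).mpr hInegset
  have hItotal : IntegrableOn h (Ioo (-1:ℝ) 1) := by
    rw [← hunion]
    exact hIoc.union hIpos
  refine ⟨hItotal, ?_⟩
  rw [← hunion, setIntegral_union hdisj measurableSet_Ioo hIoc hIpos,
    integral_Ioc_eq_integral_Ioo, hVnegset, hVneg, hVpos]
  -- final arithmetic
  rcases Nat.even_or_odd n with ⟨m, rfl⟩ | ⟨m, rfl⟩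
  · have hm : ((m + m + 1)/2 : ℕ) = m := by omega
    have he : Even (m + m) := ⟨m, rfl⟩
    rw [he.neg_one_pow, hm]
    have harg : (q+1)/2 = (m:ℝ) + (α + 1/2) := by rw [hq_def]; push_cast; ring
    rw [harg]; ring
  · have hm : ((2*m+1+1)/2 : ℕ) = m+1 := by omega
    have ho : Odd (2*m+1) := ⟨m, rfl⟩
    rw [ho.neg_one_pow, hm]
    have harg : (q+1+1)/2 = ((m+1 : ℕ):ℝ) + (α + 1/2) := by rw [hq_def]; push_cast; ring
    rw [harg]; ring

lemma key_beta {μ α : ℝ} (hμ : 0 < μ) (hα : -(1/2) < α) :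
    ∀ n : ℕ, genGamma (μ+α) n * realBeta ((((n+1)/2 : ℕ) : ℝ) + (α + 1/2)) μ
      = genGamma α n * realBeta (α + 1/2) μ := by
  intro n
  induction n with
  | zero => norm_num [genGamma]
  | succ n ih =>
    simp only [genGamma]
    rcases Nat.even_or_odd n with ⟨m, rfl⟩ | ⟨m, rfl⟩
    · rw [if_pos (by omega : (m+m+1) % 2 = 1)]
      rw [show (m+m+1+1)/2 = m+1 from by omega]
      rw [show (m+m+1)/2 = m from by omega] at ih
      have hm0 : (0:ℝ) ≤ m := Nat.cast_nonneg m
      have ha : (0:ℝ) < (m:ℝ) + (α+1/2) := by linarith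
      have hB := realBeta_add_one ha hμ
      have hB' : ((m:ℝ)+(α+1/2)+μ) * realBeta (((m+1:ℕ):ℝ)+(α+1/2)) μ
          = ((m:ℝ)+(α+1/2)) * realBeta ((m:ℝ)+(α+1/2)) μ := by
        have hne : (m:ℝ)+(α+1/2)+μ ≠ 0 := by positivity
        rw [show (((m+1:ℕ):ℝ)+(α+1/2)) = ((m:ℝ)+(α+1/2))+1 from by push_cast; ring, hB,
          show ((m:ℝ)+(α+1/2)+μ) * (((m:ℝ)+(α+1/2))/((m:ℝ)+(α+1/2)+μ)
              * realBeta ((m:ℝ)+(α+1/2)) μ)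
            = ((m:ℝ)+(α+1/2))/((m:ℝ)+(α+1/2)+μ) * ((m:ℝ)+(α+1/2)+μ)
              * realBeta ((m:ℝ)+(α+1/2)) μ from by ring,
          div_mul_cancel₀ _ hne]
      linear_combination (norm := (push_cast; ring1))
        (2*genGamma (μ+α) (m+m)) * hB' + (2*((m:ℝ)+(α+1/2))) * ih
    · rw [if_neg (by omega : ¬ (2*m+1+1) % 2 = 1)]
      rw [show (2*m+1+1+1)/2 = m+1 from by omega]
      rw [show (2*m+1+1)/2 = m+1 from by omega] at ih
      linear_combination (norm := (push_cast; ring1)) (2*(m:ℝ)+2) * ih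

end SonineAux

/-- For `μ > 0`, `α > -1/2`, `x ∈ ℂ`:
`e_{μ+α}(x) = (1/B(α+1/2, μ)) ∫_{-1}^1 e_α(xt) |t|^{2α} (1-t)^{μ-1} (1+t)^μ dt`. -/
theorem genExp_sonine_integral (μ α : ℝ) (hμ : 0 < μ) (hα : -(1/2) < α) (x : ℂ) :
    genExp (μ + α) x =
      ((1 / realBeta (α + 1/2) μ : ℝ) : ℂ) *
        ∫ t in (-1 : ℝ)..1,
          genExp α (x * t) * ((|t| ^ (2 * α) * (1 - t) ^ (μ - 1) * (1 + t) ^ μ : ℝ) : ℂ) := by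
  have hc : (0:ℝ) < α + 1/2 := by linarith
  have hμα : -(1/2 : ℝ) < μ + α := by linarith
  have hBpos : 0 < realBeta (α + 1/2) μ := realBeta_pos hc hμ
  have hmom := moment hμ hα
  rw [intervalIntegral.integral_of_le (by norm_num : (-1:ℝ) ≤ 1), integral_Ioc_eq_integral_Ioo]
  set F : ℕ → ℝ → ℂ := fun n t => (x^n / (genGamma α n : ℂ)) *
    (((t^n * (|t| ^ (2 * α) * (1 - t) ^ (μ - 1) * (1 + t) ^ μ) : ℝ)) : ℂ) with hF
  have hFint : ∀ n, Integrable (F n) (volume.restrict (Ioo (-1:ℝ) 1)) := fun n =>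
    ((hmom n).1.ofReal (𝕜 := ℂ)).const_mul _
  have hWint : IntegrableOn (fun t : ℝ => |t| ^ (2 * α) * (1 - t) ^ (μ - 1) * (1 + t) ^ μ)
      (Ioo (-1:ℝ) 1) :=
    (hmom 0).1.congr_fun (fun t _ => by simp) measurableSet_Ioo
  have hW0 : ∫ t in Ioo (-1:ℝ) 1, |t| ^ (2 * α) * (1 - t) ^ (μ - 1) * (1 + t) ^ μ
      = realBeta (α+1/2) μ := by
    have h0 := (hmom 0).2
    rw [show (∫ t in Ioo (-1:ℝ) 1, t^(0:ℕ) *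
          (|t| ^ (2 * α) * (1 - t) ^ (μ - 1) * (1 + t) ^ μ))
        = ∫ t in Ioo (-1:ℝ) 1, |t| ^ (2 * α) * (1 - t) ^ (μ - 1) * (1 + t) ^ μ from
      setIntegral_congr_fun measurableSet_Ioo (fun t _ => by simp)] at h0
    rw [h0]; norm_num
  have hwpos : ∀ t ∈ Ioo (-1:ℝ) 1,
      (0:ℝ) ≤ |t| ^ (2 * α) * (1 - t) ^ (μ - 1) * (1 + t) ^ μ := by
    intro t ht
    have h1 : (0:ℝ) ≤ |t| ^ (2*α) := Real.rpow_nonneg (abs_nonneg t) _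
    have h2 : (0:ℝ) ≤ (1-t) ^ (μ-1) := Real.rpow_nonneg (by linarith [ht.2]) _
    have h3 : (0:ℝ) ≤ (1+t) ^ μ := Real.rpow_nonneg (by linarith [ht.1]) _
    positivity
  have hcnorm : ∀ n : ℕ, ‖x^n / (genGamma α n : ℂ)‖ = ‖x‖^n / genGamma α n := by
    intro n
    rw [norm_div, norm_pow, Complex.norm_real, Real.norm_eq_abs,
      abs_of_pos (genGamma_pos_s1 hα n)]
  have hnormle : ∀ n, (∫ t in Ioo (-1:ℝ) 1, ‖F n t‖)
      ≤ (‖x‖^n / genGamma α n) * realBeta (α+1/2) μ := by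
    intro n
    have hb : IntegrableOn (fun t : ℝ => ‖x^n / (genGamma α n : ℂ)‖ *
        (|t| ^ (2 * α) * (1 - t) ^ (μ - 1) * (1 + t) ^ μ)) (Ioo (-1:ℝ) 1) :=
      hWint.const_mul _
    have hle : ∀ t ∈ Ioo (-1:ℝ) 1, ‖F n t‖ ≤ ‖x^n / (genGamma α n : ℂ)‖ *
        (|t| ^ (2 * α) * (1 - t) ^ (μ - 1) * (1 + t) ^ μ) := by
      intro t ht
      rw [hF]
      rw [norm_mul, Complex.norm_real, Real.norm_eq_abs, abs_mul, abs_of_nonneg (hwpos t ht)]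
      have h1 : |t^n| ≤ 1 := by
        rw [abs_pow]
        exact pow_le_one₀ (abs_nonneg t)
          (by rcases ht with ⟨ha1, ha2⟩; rw [abs_le]; constructor <;> linarith)
      have h2 : |t^n| * (|t| ^ (2 * α) * (1 - t) ^ (μ - 1) * (1 + t) ^ μ)
          ≤ |t| ^ (2 * α) * (1 - t) ^ (μ - 1) * (1 + t) ^ μ := by
        have := mul_le_mul_of_nonneg_right h1 (hwpos t ht)
        rwa [one_mul] at this
      exact mul_le_mul_of_nonneg_left h2 (norm_nonneg _)
    calc (∫ t in Ioo (-1:ℝ) 1, ‖F n t‖)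
        ≤ ∫ t in Ioo (-1:ℝ) 1, ‖x^n / (genGamma α n : ℂ)‖ *
            (|t| ^ (2 * α) * (1 - t) ^ (μ - 1) * (1 + t) ^ μ) :=
          setIntegral_mono_on (hFint n).norm hb measurableSet_Ioo hle
      _ = (‖x‖^n / genGamma α n) * realBeta (α+1/2) μ := by
          rw [integral_const_mul, hW0, hcnorm n]
  have hsum : Summable (fun n => ∫ t in Ioo (-1:ℝ) 1, ‖F n t‖) := by
    refine Summable.of_nonneg_of_le
      (fun n => integral_nonneg (fun t => norm_nonneg _)) hnormle ?_
    exact (summable_div_genGamma hα (norm_nonneg x)).mul_right _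
  have hhs := hasSum_integral_of_summable_integral_norm hFint hsum
  have heq1 : ∀ t : ℝ, ∑' n, F n t = genExp α (x*t) *
      ((|t| ^ (2 * α) * (1 - t) ^ (μ - 1) * (1 + t) ^ μ : ℝ) : ℂ) := by
    intro t
    rw [genExp, ← tsum_mul_right]
    refine tsum_congr fun n => ?_
    simp only [hF, Complex.ofReal_mul, Complex.ofReal_pow]
    ring
  have hFn : ∀ n, (∫ t in Ioo (-1:ℝ) 1, F n t)
      = (realBeta (α+1/2) μ : ℂ) * (x^n / (genGamma (μ+α) n : ℂ)) := by
    intro n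
    rw [hF, integral_const_mul]
    rw [show (∫ t in Ioo (-1:ℝ) 1,
          ((t^n * (|t| ^ (2 * α) * (1 - t) ^ (μ - 1) * (1 + t) ^ μ) : ℝ) : ℂ))
        = ((∫ t in Ioo (-1:ℝ) 1,
            t^n * (|t| ^ (2 * α) * (1 - t) ^ (μ - 1) * (1 + t) ^ μ) : ℝ) : ℂ) from
      integral_ofReal]
    rw [(hmom n).2]
    have hkey := key_beta hμ hα n
    have h1 : (genGamma α n) ≠ 0 := (genGamma_pos_s1 hα n).ne'
    have h2 : (genGamma (μ+α) n) ≠ 0 := (genGamma_pos_s1 hμα n).ne'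
    have h3 : realBeta ((((n+1)/2 : ℕ) : ℝ) + (α + 1/2)) μ
        = genGamma α n * realBeta (α+1/2) μ / genGamma (μ+α) n := by
      rw [eq_div_iff h2]
      linear_combination hkey
    have h1' : ((genGamma α n : ℝ) : ℂ) ≠ 0 := Complex.ofReal_ne_zero.mpr h1
    have h2' : ((genGamma (μ+α) n : ℝ) : ℂ) ≠ 0 := Complex.ofReal_ne_zero.mpr h2
    rw [h3]
    push_cast
    field_simp
  have htotal : (∫ t in Ioo (-1:ℝ) 1, genExp α (x*t) *
        ((|t| ^ (2 * α) * (1 - t) ^ (μ - 1) * (1 + t) ^ μ : ℝ) : ℂ))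
      = (realBeta (α+1/2) μ : ℂ) * genExp (μ+α) x := by
    rw [setIntegral_congr_fun measurableSet_Ioo (fun t _ => (heq1 t).symm), ← hhs.tsum_eq]
    rw [show (fun n => ∫ t in Ioo (-1:ℝ) 1, F n t)
        = fun n => (realBeta (α+1/2) μ : ℂ) * (x^n / (genGamma (μ+α) n : ℂ)) from
      funext hFn, tsum_mul_left, genExp]
  rw [htotal]
  have hB0 : ((realBeta (α+1/2) μ : ℝ) : ℂ) ≠ 0 := by
    simpa using hBpos.ne'
  rw [show ((1 / realBeta (α + 1/2) μ : ℝ) : ℂ) = ((realBeta (α+1/2) μ : ℝ) : ℂ)⁻¹ by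
    push_cast; ring, inv_mul_cancel_left₀ hB0]
end

section
/- Let μ > 0, n ∈ ℕ and x ∈ ℂ. Then H_n^μ(x) = (1/B(1/2, μ)) ∫_{−1}^{1} H_n(x t) (1−t)^{μ−1} (1+t)^{μ} dt, where H_n is the classical (physicists') Hermite polynomial. -/
open MeasureTheory
open scoped BigOperators Nat

namespace GenHermiteAux

lemma genGamma_pos {μ : ℝ} (hμ : 0 < μ) : ∀ n, 0 < genGamma μ n
  | 0 => one_pos
  | (n+1) => by
    have h := genGamma_pos hμ n
    show 0 < ((n : ℝ) + 1 + 2 * μ * (if (n + 1) % 2 = 1 then (1:ℝ) else 0)) * genGamma μ n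
    apply mul_pos _ h
    split <;> positivity

lemma genGamma_zero_eq (n : ℕ) : genGamma 0 n = (n ! : ℝ) := by
  induction n with
  | zero => simp [genGamma]
  | succ n ih =>
    show ((n : ℝ) + 1 + 2 * 0 * _) * genGamma 0 n = _
    rw [ih, Nat.factorial_succ]
    push_cast
    ring

/-- integrability of `(1-t)^r * g t` on `[-1,1]` for `r > -1` and continuous-on `g`. -/
lemma wInt {r : ℝ} (hr : -1 < r) {g : ℝ → ℝ}
    (hg : ContinuousOn g (Set.uIcc (-1) 1)) :
    IntervalIntegrable (fun t : ℝ => (1 - t) ^ r * g t) volume (-1) 1 := by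
  have h0 : IntervalIntegrable (fun x : ℝ => x ^ r) volume 0 2 :=
    intervalIntegral.intervalIntegrable_rpow' hr
  have h1 : IntervalIntegrable (fun t : ℝ => (1 - t) ^ r) volume (-1) 1 := by
    have h := (h0.comp_sub_left 1).symm
    norm_num at h
    exact h
  exact h1.mul_continuousOn hg

noncomputable def mom (μ : ℝ) (m : ℕ) : ℝ :=
  ∫ t in (-1:ℝ)..1, t ^ m * ((1 - t) ^ (μ - 1) * (1 + t) ^ μ)

lemma contOn_rpow_add {μ : ℝ} (hμ : 0 ≤ μ) (s : Set ℝ) :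
    ContinuousOn (fun t : ℝ => (1 + t) ^ μ) s :=
  (continuousOn_const.add continuousOn_id).rpow_const fun x _ => Or.inr hμ

lemma momInt {μ : ℝ} (hμ : 0 < μ) (m : ℕ) :
    IntervalIntegrable (fun t : ℝ => t ^ m * ((1 - t) ^ (μ - 1) * (1 + t) ^ μ)) volume (-1) 1 := by
  have e : (fun t : ℝ => t ^ m * ((1 - t) ^ (μ - 1) * (1 + t) ^ μ))
      = fun t : ℝ => (1 - t) ^ (μ - 1) * ((1 + t) ^ μ * t ^ m) := by
    funext t; ring
  rw [e]
  exact wInt (by linarith) ((contOn_rpow_add hμ.le _).mul (continuous_pow m).continuousOn)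



lemma integral_rpow_beta {a b : ℝ} (ha : 0 < a) (hb : 0 < b) :
    ∫ s in (0:ℝ)..1, s ^ (a - 1) * (1 - s) ^ (b - 1) = realBeta a b := by
  have hG := Complex.Gamma_mul_Gamma_eq_betaIntegral (s := (a:ℂ)) (t := (b:ℂ))
    (by simpa using ha) (by simpa using hb)
  have h2 : Complex.betaIntegral a b
      = ((∫ s in (0:ℝ)..1, s ^ (a-1) * (1-s) ^ (b-1) : ℝ) : ℂ) := by
    rw [Complex.betaIntegral, ← intervalIntegral.integral_ofReal]
    apply intervalIntegral.integral_congr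
    intro s hs
    rw [Set.uIcc_of_le (by norm_num : (0:ℝ) ≤ 1)] at hs
    dsimp only
    rw [show ((a:ℂ)-1) = ((a-1:ℝ):ℂ) from by push_cast; ring,
      show ((b:ℂ)-1) = ((b-1:ℝ):ℂ) from by push_cast; ring,
      show (1 - (s:ℂ)) = ((1-s:ℝ):ℂ) from by push_cast; ring,
      ← Complex.ofReal_cpow hs.1, ← Complex.ofReal_cpow (by linarith [hs.2])]
    push_cast
    ring
  rw [h2, ← Complex.ofReal_add, Complex.Gamma_ofReal, Complex.Gamma_ofReal,
    Complex.Gamma_ofReal, ← Complex.ofReal_mul, ← Complex.ofReal_mul] at hG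
  have hG' := Complex.ofReal_inj.mp hG
  have hne : Real.Gamma (a+b) ≠ 0 := (Real.Gamma_pos_of_pos (by linarith)).ne'
  rw [realBeta]
  field_simp
  linarith [hG']

lemma mom_zero {μ : ℝ} (hμ : 0 < μ) : mom μ 0 = realBeta (1/2) μ := by
  have comp := intervalIntegral.integral_comp_sub_mul
      (f := fun t : ℝ => (1 - t) ^ (μ - 1) * (1 + t) ^ μ) (a := 0) (b := 1)
      (c := 2) (d := 1) two_ne_zero
  simp only [smul_eq_mul] at comp
  norm_num at comp
  -- comp : ∫ x in 0..1, (1 - (1 - 2*x))^(μ-1) * (1 + (1-2*x))^μ = 2⁻¹ * ∫ t in -1..1, ...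
  have e2 : ∫ s in (0:ℝ)..1, (2*s) ^ (μ-1) * (1 + (1 - 2*s)) ^ μ
      = ∫ s in (0:ℝ)..1, 2 ^ (2*μ - 1) * (s ^ (μ - 1) * (1 - s) ^ (μ+1-1)) := by
    apply intervalIntegral.integral_congr
    intro s hs
    rw [Set.uIcc_of_le (by norm_num : (0:ℝ) ≤ 1)] at hs
    dsimp only
    rw [show 1 + (1 - 2*s) = 2 * (1 - s) from by ring,
      Real.mul_rpow zero_le_two hs.1, Real.mul_rpow zero_le_two (by linarith [hs.2])]
    rw [show μ + 1 - 1 = μ from by ring]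
    rw [show (2:ℝ)^(μ-1) * s^(μ-1) * ((2:ℝ)^μ * (1-s)^μ)
        = ((2:ℝ)^(μ-1) * (2:ℝ)^μ) * (s^(μ-1) * (1-s)^μ) from by ring,
      ← Real.rpow_add two_pos, show μ - 1 + μ = 2*μ - 1 from by ring]
  rw [e2, intervalIntegral.integral_const_mul, integral_rpow_beta hμ (by linarith)] at comp
  have e3 : mom μ 0 = 2 * (2 ^ (2*μ - 1) * realBeta μ (μ+1)) := by
    rw [mom]
    simp only [pow_zero, one_mul]
    linarith [comp]
  rw [e3]
  have hμ2 : (0:ℝ) < 2*μ := by linarith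
  have hg1 := Real.Gamma_pos_of_pos hμ
  have hg2 := Real.Gamma_pos_of_pos (by linarith : (0:ℝ) < μ + 1/2)
  have hg3 := Real.Gamma_pos_of_pos hμ2
  have hdup := Real.Gamma_mul_Gamma_add_half μ
  have hμ1 : Real.Gamma (μ + 1) = μ * Real.Gamma μ := Real.Gamma_add_one hμ.ne'
  have h2μ1 : Real.Gamma (2*μ + 1) = 2*μ * Real.Gamma (2*μ) := Real.Gamma_add_one hμ2.ne'
  have hpow : (2:ℝ) ^ (2*μ - 1) * 2 ^ (1 - 2*μ) = 1 := by
    rw [← Real.rpow_add two_pos]; norm_num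
  have hπ : 0 < Real.sqrt Real.pi := Real.sqrt_pos.mpr Real.pi_pos
  unfold realBeta
  rw [show μ + (μ + 1) = 2*μ + 1 from by ring, h2μ1, hμ1, Real.Gamma_one_half_eq,
    show (1:ℝ)/2 + μ = μ + 1/2 from by ring]
  set G := Real.Gamma μ with hG
  set H := Real.Gamma (μ + 1/2) with hH
  set K := Real.Gamma (2*μ) with hK
  set A := (2:ℝ)^(2*μ-1) with hA
  set P := (2:ℝ)^(1-2*μ) with hP
  set s := Real.sqrt Real.pi with hs
  have hHne : H ≠ 0 := hg2.ne'
  have hKne : K ≠ 0 := hg3.ne'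
  have hμne : μ ≠ 0 := hμ.ne'
  field_simp
  linear_combination A * hdup + (K * s) * hpow

lemma mom_rec {μ : ℝ} (hμ : 0 < μ) (m : ℕ) :
    (2*μ + 1 + m) * mom μ (m+1) = mom μ m + m * mom μ (m-1) := by
  set F : ℝ → ℝ := fun t => (1 - t) ^ μ * ((1 + t) ^ (μ+1) * t ^ m) with hF
  set D : ℝ → ℝ := fun t =>
    (-1 * μ * (1 - t) ^ (μ - 1)) * ((1 + t) ^ (μ+1) * t ^ m)
    + (1 - t) ^ μ * ((1 * (μ+1) * (1 + t) ^ (μ+1-1)) * t ^ m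
        + (1 + t) ^ (μ+1) * ((m:ℝ) * t ^ (m-1))) with hD
  have hderiv : ∀ t ∈ Set.Ioo (-1:ℝ) 1, HasDerivAt F (D t) t := by
    intro t ht
    have h1t : (1:ℝ) - t ≠ 0 := by have := ht.2; intro h; nlinarith
    have h2t : (1:ℝ) + t ≠ 0 := by have := ht.1; intro h; nlinarith
    have d1 : HasDerivAt (fun t : ℝ => (1 - t) ^ μ) (-1 * μ * (1 - t) ^ (μ - 1)) t :=
      ((hasDerivAt_id t).const_sub 1).rpow_const (Or.inl h1t)
    have d2 : HasDerivAt (fun t : ℝ => (1 + t) ^ (μ+1)) (1 * (μ+1) * (1 + t) ^ (μ+1-1)) t :=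
      ((hasDerivAt_id t).const_add 1).rpow_const (Or.inl h2t)
    have d3 : HasDerivAt (fun t : ℝ => t ^ m) ((m:ℝ) * t ^ (m-1)) t := hasDerivAt_pow m t
    exact d1.mul (d2.mul d3)
  have hcont : ContinuousOn F (Set.Icc (-1:ℝ) 1) :=
    ((continuousOn_const.sub continuousOn_id).rpow_const fun x _ => Or.inr hμ.le).mul
      (((continuousOn_const.add continuousOn_id).rpow_const fun x _ => Or.inr (by linarith)).mul
        (continuous_pow m).continuousOn)
  have hDint : IntervalIntegrable D volume (-1) 1 := by
    have e : D = fun t : ℝ => (1 - t) ^ (μ - 1) * (-1 * μ * ((1 + t) ^ (μ+1) * t ^ m))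
        + (1 - t) ^ μ * ((1 * (μ+1) * (1 + t) ^ (μ+1-1)) * t ^ m
            + (1 + t) ^ (μ+1) * ((m:ℝ) * t ^ (m-1))) := by
      funext t; rw [hD]; ring
    rw [e]
    refine (wInt (by linarith) ?_).add (wInt (by linarith) ?_)
    · exact continuousOn_const.mul ((contOn_rpow_add (by linarith) _).mul
        (continuous_pow m).continuousOn)
    · exact ((continuousOn_const.mul (contOn_rpow_add (by linarith) _)).mul
        (continuous_pow m).continuousOn).add ((contOn_rpow_add (by linarith) _).mul
        (continuousOn_const.mul (continuous_pow (m-1)).continuousOn))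
  have hFTC : ∫ t in (-1:ℝ)..1, D t = F 1 - F (-1) :=
    intervalIntegral.integral_eq_sub_of_hasDeriv_right_of_le (by norm_num)
      hcont (fun t ht => (hderiv t ht).hasDerivWithinAt) hDint
  have hF1 : F 1 = 0 := by
    rw [hF]
    norm_num [Real.zero_rpow hμ.ne']
  have hFm1 : F (-1) = 0 := by
    rw [hF]
    norm_num [Real.zero_rpow (by linarith : μ + 1 ≠ 0)]
  have hcongr : ∫ t in (-1:ℝ)..1, D t
      = ∫ t in (-1:ℝ)..1, (t ^ m * ((1-t)^(μ-1)*(1+t)^μ)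
          + (m:ℝ) * (t ^ (m-1) * ((1-t)^(μ-1)*(1+t)^μ))
          - (2*μ+1+m) * (t ^ (m+1) * ((1-t)^(μ-1)*(1+t)^μ))) := by
    apply intervalIntegral.integral_congr_ae
    have hae : ∀ᵐ t : ℝ, t ∉ ({1} : Set ℝ) := (Set.countable_singleton (1:ℝ)).ae_notMem volume
    filter_upwards [hae] with t ht hmem
    rw [Set.uIoc_of_le (by norm_num : (-1:ℝ) ≤ 1)] at hmem
    have ht1 : t ≠ 1 := by simpa using ht
    have h1 : 0 < 1 - t := by
      rcases lt_or_eq_of_le hmem.2 with h | h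
      · linarith
      · exact absurd h ht1
    have h2 : 0 < 1 + t := by linarith [hmem.1]
    have e1 := Real.rpow_add_one h1.ne' (μ-1)
    rw [show μ - 1 + 1 = μ from by ring] at e1
    have e2 : (1 + t) ^ (μ+1) = (1 + t) ^ μ * (1 + t) := Real.rpow_add_one h2.ne' μ
    have e3 : (1 + t) ^ (μ+1-1) = (1 + t) ^ μ := by norm_num
    rw [hD]
    dsimp only
    rw [e1, e2, e3]
    rcases m with _ | j
    · norm_num
      ring
    · simp only [Nat.add_sub_cancel]
      push_cast
      ring
  have hA := momInt hμ m
  have hB := (momInt hμ (m-1)).const_mul (m:ℝ)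
  have hC := (momInt hμ (m+1)).const_mul (2*μ+1+(m:ℝ))
  have hsplit : ∫ t in (-1:ℝ)..1, (t ^ m * ((1-t)^(μ-1)*(1+t)^μ)
          + (m:ℝ) * (t ^ (m-1) * ((1-t)^(μ-1)*(1+t)^μ))
          - (2*μ+1+m) * (t ^ (m+1) * ((1-t)^(μ-1)*(1+t)^μ)))
      = mom μ m + (m:ℝ) * mom μ (m-1) - (2*μ+1+(m:ℝ)) * mom μ (m+1) := by
    rw [intervalIntegral.integral_sub (hA.add hB) hC, intervalIntegral.integral_add hA hB,
      intervalIntegral.integral_const_mul, intervalIntegral.integral_const_mul]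
    rfl
  rw [hcongr, hsplit, hF1, hFm1] at hFTC
  linarith

lemma mom_eq {μ : ℝ} (hμ : 0 < μ) : ∀ m : ℕ,
    mom μ m * genGamma μ m = (m ! : ℝ) * realBeta (1/2) μ := by
  intro m
  induction m using Nat.strong_induction_on with
  | _ m ih =>
    match m, ih with
    | 0, _ => simpa [genGamma] using mom_zero hμ
    | 1, _ =>
      have h := mom_rec hμ 0
      rw [mom_zero hμ] at h
      simp only [Nat.cast_zero, add_zero, zero_mul] at h
      simp only [genGamma, Nat.factorial_one, Nat.cast_one]
      norm_num
      nlinarith [h]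
    | (m+2), ih =>
      have e3 := mom_rec hμ (m+1)
      simp only [Nat.add_sub_cancel] at e3
      have ih1 := ih (m+1) (by omega)
      have ih0 := ih m (by omega)
      have hd : (0:ℝ) < 2*μ + 1 + ((m:ℝ)+1) := by positivity
      apply mul_left_cancel₀ hd.ne'
      push_cast at e3 ⊢
      rcases Nat.even_or_odd m with he | ho
      · obtain ⟨j, rfl⟩ := he
        have h2 : (j + j + 1 + 1) % 2 = 0 := by omega
        have h1 : (j + j + 1) % 2 = 1 := by omega
        rw [show j+j+1+1 = j+j+2 from by omega] at e3
        push_cast at e3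
        simp only [genGamma, h1, h2, reduceIte] at ih1 ih0 ⊢
        push_cast [Nat.factorial_succ] at ih1 ih0 ⊢
        linear_combination ((((j:ℝ)+j+1+1) * (((j:ℝ)+j+1+2*μ)) * genGamma μ (j+j)) * e3
          + (((j:ℝ)+j+1+1)) * ih1
          + (((j:ℝ)+j+1) * (((j:ℝ)+j+1+1)) * (((j:ℝ)+j+1+2*μ))) * ih0)
      · obtain ⟨j, rfl⟩ := ho
        have h2 : (2*j + 1 + 1 + 1) % 2 = 1 := by omega
        have h1 : (2*j + 1 + 1) % 2 = 0 := by omega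
        have h0 : (2*j + 1) % 2 = 1 := by omega
        rw [show 2*j+1+1+1 = 2*j+1+2 from by omega] at e3
        push_cast at e3
        simp only [genGamma, h0, h1, h2, reduceIte] at ih1 ih0 ⊢
        push_cast [Nat.factorial_succ] at ih1 ih0 ⊢
        linear_combination ((2*(j:ℝ)+1+1+1+2*μ) * (2*(j:ℝ)+1+1) * ((2*(j:ℝ)+1+2*μ)) * genGamma μ (2*j) * e3
          + (2*(j:ℝ)+1+1+1+2*μ) * ih1
          + ((2*(j:ℝ)+1+1+1+2*μ) * (2*(j:ℝ)+1+1) * (2*(j:ℝ)+1+1)) * ih0)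

end GenHermiteAux

/-- For `μ > 0`, `n ∈ ℕ`, `x ∈ ℂ`:
`H_n^μ(x) = (1/B(1/2, μ)) ∫_{-1}^1 H_n(xt) (1-t)^{μ-1} (1+t)^μ dt`,
where `H_n = H_n^0` is the classical physicists' Hermite polynomial. -/
theorem genHermite_eq_integral_hermite (μ : ℝ) (hμ : 0 < μ) (n : ℕ) (x : ℂ) :
    genHermite μ n x =
      ((1 / realBeta (1/2) μ : ℝ) : ℂ) *
        ∫ t in (-1 : ℝ)..1,
          genHermite 0 n (x * t) * (((1 - t) ^ (μ - 1) * (1 + t) ^ μ : ℝ) : ℂ) := by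

  have hB : 0 < realBeta (1/2) μ := div_pos
    (mul_pos (Real.Gamma_pos_of_pos (by norm_num)) (Real.Gamma_pos_of_pos hμ))
    (Real.Gamma_pos_of_pos (by linarith))
  set c : ℕ → ℂ := fun k => (n ! : ℂ) *
    ((-1)^k * (2*x)^(n-2*k) / ((k ! : ℂ) * ((n-2*k)! : ℂ))) with hc
  have hpt : ∀ t ∈ Set.uIcc (-1:ℝ) 1, genHermite 0 n (x * t) * (((1-t)^(μ-1)*(1+t)^μ : ℝ) : ℂ)
      = ∑ k ∈ Finset.range (n/2+1),
          c k * ((t^(n-2*k) * ((1-t)^(μ-1)*(1+t)^μ) : ℝ) : ℂ) := by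
    intro t _
    rw [genHermite, Finset.mul_sum, Finset.sum_mul]
    apply Finset.sum_congr rfl
    intro k _
    rw [GenHermiteAux.genGamma_zero_eq, hc]
    rw [show (2*(x*(t:ℂ))) = (2*x)*(t:ℂ) from by ring, mul_pow]
    push_cast
    ring
  rw [intervalIntegral.integral_congr hpt]
  have hIk : ∀ k ∈ Finset.range (n/2+1), IntervalIntegrable
      (fun t : ℝ => c k * ((t^(n-2*k) * ((1-t)^(μ-1)*(1+t)^μ) : ℝ) : ℂ)) volume (-1) 1 := by
    intro k _
    apply IntervalIntegrable.const_mul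
    have h := GenHermiteAux.momInt hμ (n-2*k)
    exact ⟨h.1.ofReal, h.2.ofReal⟩
  rw [intervalIntegral.integral_finset_sum hIk]
  have hval : ∀ k ∈ Finset.range (n/2+1),
      (∫ t in (-1:ℝ)..1, c k * ((t^(n-2*k) * ((1-t)^(μ-1)*(1+t)^μ) : ℝ) : ℂ))
        = c k * ((GenHermiteAux.mom μ (n-2*k) : ℝ) : ℂ) := by
    intro k _
    rw [intervalIntegral.integral_const_mul, intervalIntegral.integral_ofReal]
    rfl
  rw [Finset.sum_congr rfl hval, genHermite, Finset.mul_sum, Finset.mul_sum]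
  apply Finset.sum_congr rfl
  intro k _
  have hg := GenHermiteAux.genGamma_pos hμ (n-2*k)
  have hm := GenHermiteAux.mom_eq hμ (n-2*k)
  have hmC : ((GenHermiteAux.mom μ (n-2*k) : ℝ) : ℂ) * ((genGamma μ (n-2*k) : ℝ) : ℂ)
      = (((n-2*k)! : ℕ) : ℂ) * ((realBeta (1/2) μ : ℝ) : ℂ) := by
    rw [← Complex.ofReal_mul, hm]
    push_cast
    ring
  have hgC : ((genGamma μ (n-2*k) : ℝ) : ℂ) ≠ 0 := by
    simpa using hg.ne'
  have hBC : ((realBeta (1/2) μ : ℝ) : ℂ) ≠ 0 := by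
    simpa using hB.ne'
  have hkC : ((k ! : ℕ) : ℂ) ≠ 0 := by exact_mod_cast (Nat.factorial_pos k).ne'
  have hmkC : (((n-2*k)! : ℕ) : ℂ) ≠ 0 := by exact_mod_cast (Nat.factorial_pos (n-2*k)).ne'
  rw [hc]
  push_cast
  field_simp
  linear_combination (-(n ! : ℂ) * x^(n-2*k) * (2:ℂ)^(n-2*k)) * hmC
end

section
/- (Inversion formula.) Let μ > −1/2 be real, n ∈ ℕ and x ∈ ℂ. Then (2x)^n / γ_μ(n) = Σ_{k=0}^{⌊n/2⌋} H_{n−2k}^μ(x) / (k! (n−2k)!). -/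
open MeasureTheory
open scoped BigOperators Nat

lemma tri_swap {M : Type*} [AddCommMonoid M] (N : ℕ) (f : ℕ → ℕ → M) :
    ∑ k ∈ Finset.range (N + 1), ∑ j ∈ Finset.range (N - k + 1), f k j
      = ∑ m ∈ Finset.range (N + 1), ∑ k ∈ Finset.range (m + 1), f k (m - k) := by
  rw [Finset.sum_range_diag_flip (N + 1) f]
  refine Finset.sum_congr rfl fun k hk => ?_
  have hk' : k ≤ N := by simpa [Nat.lt_succ_iff] using Finset.mem_range.mp hk
  have : N + 1 - k = N - k + 1 := by omega
  rw [this]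

lemma alt_sum (m : ℕ) :
    ∑ k ∈ Finset.range (m + 1), ((-1 : ℂ)) ^ (m - k) / ((k ! : ℂ) * ((m - k)! : ℂ))
      = if m = 0 then 1 else 0 := by
  have hm : ((m ! : ℂ)) ≠ 0 := Nat.cast_ne_zero.mpr (Nat.factorial_ne_zero m)
  have h1 : ∀ k ∈ Finset.range (m + 1),
      ((-1 : ℂ)) ^ (m - k) / ((k ! : ℂ) * ((m - k)! : ℂ))
        = ((-1 : ℂ)) ^ (m - k) * (m.choose k : ℂ) / (m ! : ℂ) := by
    intro k hk
    have hk' : k ≤ m := by simpa [Nat.lt_succ_iff] using Finset.mem_range.mp hk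
    rw [Nat.cast_choose ℂ hk']
    have h2 : ((k ! : ℂ)) ≠ 0 := Nat.cast_ne_zero.mpr (Nat.factorial_ne_zero k)
    have h3 : (((m - k)! : ℂ)) ≠ 0 := Nat.cast_ne_zero.mpr (Nat.factorial_ne_zero _)
    field_simp
  rw [Finset.sum_congr rfl h1, ← Finset.sum_div]
  have h4 : ∑ k ∈ Finset.range (m + 1), ((-1 : ℂ)) ^ (m - k) * (m.choose k : ℂ)
      = ∑ k ∈ Finset.range (m + 1), ((-1 : ℂ)) ^ k * (m.choose k : ℂ) := by
    rw [← Finset.sum_range_reflect]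
    refine Finset.sum_congr rfl fun k hk => ?_
    have hk' : k ≤ m := by simpa [Nat.lt_succ_iff] using Finset.mem_range.mp hk
    have e1 : m + 1 - 1 - k = m - k := by omega
    rw [e1]
    congr 1
    · congr 1; omega
    · rw [Nat.choose_symm hk']
  rw [h4]
  have h5 : ∑ k ∈ Finset.range (m + 1), ((-1 : ℂ)) ^ k * (m.choose k : ℂ)
      = ((if m = 0 then 1 else 0 : ℤ) : ℂ) := by
    rw [← Int.alternating_sum_range_choose]
    push_cast
    rfl
  rw [h5]
  split
  · next h => subst h; norm_num [Nat.factorial]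
  · simp

/-- Inversion formula: for `μ > -1/2`, `n ∈ ℕ`, `x ∈ ℂ`:
`(2x)^n / γ_μ(n) = Σ_{k=0}^{⌊n/2⌋} H_{n-2k}^μ(x) / (k! (n-2k)!)`. -/

theorem genHermite_inversion (μ : ℝ) (hμ : -(1/2) < μ) (n : ℕ) (x : ℂ) :
    (2 * x) ^ n / ((genGamma μ n : ℝ) : ℂ) =
      ∑ k ∈ Finset.range (n / 2 + 1),
        genHermite μ (n - 2 * k) x / ((k ! : ℂ) * ((n - 2 * k)! : ℂ)) := by
  have key : ∀ k ∈ Finset.range (n / 2 + 1),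
      genHermite μ (n - 2 * k) x / ((k ! : ℂ) * ((n - 2 * k)! : ℂ))
        = ∑ j ∈ Finset.range (n / 2 - k + 1),
            (-1) ^ j * (2 * x) ^ (n - 2 * (k + j)) /
              ((k ! : ℂ) * (j ! : ℂ) * ((genGamma μ (n - 2 * (k + j)) : ℝ) : ℂ)) := by
    intro k hk
    have hk' : k ≤ n / 2 := by simpa [Nat.lt_succ_iff] using Finset.mem_range.mp hk
    have hdiv : (n - 2 * k) / 2 = n / 2 - k := by omega
    rw [genHermite, hdiv]
    have hf : (((n - 2 * k)! : ℂ)) ≠ 0 := Nat.cast_ne_zero.mpr (Nat.factorial_ne_zero _)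
    rw [mul_comm ((k ! : ℂ)) (((n - 2 * k)! : ℂ)), mul_div_mul_left _ _ hf, Finset.sum_div]
    refine Finset.sum_congr rfl fun j hj => ?_
    have e : n - 2 * k - 2 * j = n - 2 * (k + j) := by omega
    rw [e]
    ring
  rw [Finset.sum_congr rfl key, tri_swap]
  have key2 : ∀ m ∈ Finset.range (n / 2 + 1),
      ∑ k ∈ Finset.range (m + 1),
          (-1) ^ (m - k) * (2 * x) ^ (n - 2 * (k + (m - k))) /
            ((k ! : ℂ) * ((m - k)! : ℂ) * ((genGamma μ (n - 2 * (k + (m - k))) : ℝ) : ℂ))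
        = if m = 0 then (2 * x) ^ n / ((genGamma μ n : ℝ) : ℂ) else 0 := by
    intro m hm
    have h1 : ∀ k ∈ Finset.range (m + 1),
        (-1) ^ (m - k) * (2 * x) ^ (n - 2 * (k + (m - k))) /
            ((k ! : ℂ) * ((m - k)! : ℂ) * ((genGamma μ (n - 2 * (k + (m - k))) : ℝ) : ℂ))
          = (2 * x) ^ (n - 2 * m) / ((genGamma μ (n - 2 * m) : ℝ) : ℂ) *
              ((-1) ^ (m - k) / ((k ! : ℂ) * ((m - k)! : ℂ))) := by
      intro k hk
      have hkm : k ≤ m := by simpa [Nat.lt_succ_iff] using Finset.mem_range.mp hk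
      have e : k + (m - k) = m := by omega
      rw [e]
      ring
    rw [Finset.sum_congr rfl h1, ← Finset.mul_sum, alt_sum]
    split
    · next h => subst h; simp
    · exact mul_zero _
  rw [Finset.sum_congr rfl key2, Finset.sum_ite_eq' (Finset.range (n / 2 + 1)) 0
    (fun _ => (2 * x) ^ n / ((genGamma μ n : ℝ) : ℂ))]
  simp
end
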